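/- Let λ > 0, T > 0, and let L be continuous on [0,T] with |L| ≤ M₀. Let H(t) = -∫₀ᵗ (Σ_{k=1}^∞ L^{*k}(t-s) s^{k-1}/(k-1)!) e^{-λ s} ds. Then there is a constant C_T depending only on T and M₀ (not on λ) such that |H(t)| ≤ C_T / λ for all t ∈ [0,T]. -/

import Mathlib

open MeasureTheory

/-- Convolution on `[0,t]`: `(f*g)(t) = ∫₀ᵗ f(t-s) g(s) ds`. -/
noncomputable def conv (f g : ℝ → ℝ) : ℝ → ℝ :=
  fun t => ∫ s in (0:ℝ)..t, f (t - s) * g s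

/-- Iterated convolution powers: `convPow f n = f^{*(n+1)}`. -/
noncomputable def convPow (f : ℝ → ℝ) : ℕ → ℝ → ℝ
  | 0 => f
  | n + 1 => conv f (convPow f n)

lemma convPow_bound (T M₀ : ℝ) (hM₀ : 0 ≤ M₀) (hT : 0 ≤ T) (L : ℝ → ℝ)
    (hL : ∀ t ∈ Set.Icc (0:ℝ) T, |L t| ≤ M₀) :
    ∀ n : ℕ, ∀ u ∈ Set.Icc (0:ℝ) T, |convPow L n u| ≤ M₀ * (M₀ * T) ^ n := by
  intro n
  induction n with
  | zero => intro u hu; simpa [convPow] using hL u hu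
  | succ n ih =>
    intro u hu
    obtain ⟨hu0, huT⟩ := hu
    have key : ∀ x ∈ Set.uIoc (0:ℝ) u, ‖L (u - x) * convPow L n x‖ ≤ M₀ * (M₀ * (M₀ * T) ^ n) := by
      intro x hx
      rw [Set.uIoc_of_le hu0] at hx
      obtain ⟨hx0, hxu⟩ := hx
      have hx1 : x ∈ Set.Icc (0:ℝ) T := ⟨le_of_lt hx0, le_trans hxu huT⟩
      have hx2 : u - x ∈ Set.Icc (0:ℝ) T := ⟨by linarith, by linarith⟩
      rw [Real.norm_eq_abs, abs_mul]
      exact mul_le_mul (hL _ hx2) (ih x hx1) (abs_nonneg _)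
        hM₀
    have h1 : ‖∫ s in (0:ℝ)..u, L (u - s) * convPow L n s‖ ≤
        (M₀ * (M₀ * (M₀ * T) ^ n)) * |u - 0| :=
      intervalIntegral.norm_integral_le_of_norm_le_const key
    have hMn : 0 ≤ M₀ * (M₀ * T) ^ n := by positivity
    calc |convPow L (n+1) u| = ‖∫ s in (0:ℝ)..u, L (u - s) * convPow L n s‖ := rfl
      _ ≤ (M₀ * (M₀ * (M₀ * T) ^ n)) * |u - 0| := h1
      _ ≤ (M₀ * (M₀ * (M₀ * T) ^ n)) * T := by
          rw [sub_zero, abs_of_nonneg hu0]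
          exact mul_le_mul_of_nonneg_left huT (by positivity)
      _ = M₀ * (M₀ * T) ^ (n+1) := by ring

theorem resolvent_H_bound (T M₀ : ℝ) (hT : 0 < T) (hM₀ : 0 ≤ M₀) :
    ∃ C : ℝ, ∀ lam : ℝ, 0 < lam → ∀ L : ℝ → ℝ,
      ContinuousOn L (Set.Icc 0 T) → (∀ t ∈ Set.Icc (0:ℝ) T, |L t| ≤ M₀) →
      ∀ t ∈ Set.Icc (0:ℝ) T,
        |(-(∫ s in (0:ℝ)..t,
            (∑' n : ℕ, convPow L n (t - s) * s ^ n / (Nat.factorial n : ℝ))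
              * Real.exp (-lam * s)))| ≤ C / lam := by
  refine ⟨M₀ * Real.exp (M₀ * T * T), ?_⟩
  intro lam hlam L hLc hL t ht
  obtain ⟨ht0, htT⟩ := ht
  set C := M₀ * Real.exp (M₀ * T * T) with hC
  have hCpos : 0 ≤ C := by positivity
  -- HasSum of the dominating series
  have hexp : HasSum (fun n : ℕ => (M₀ * T * T) ^ n / (Nat.factorial n : ℝ))
      (Real.exp (M₀ * T * T)) := by
    have := NormedSpace.expSeries_div_hasSum_exp (M₀ * T * T)
    rwa [← Real.exp_eq_exp_ℝ] at this
  have hexpC : HasSum (fun n : ℕ => M₀ * ((M₀ * T * T) ^ n / (Nat.factorial n : ℝ))) C :=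
    hexp.mul_left M₀
  -- pointwise bound on the tsum
  have hbound : ∀ s ∈ Set.uIoc (0:ℝ) t,
      ‖(∑' n : ℕ, convPow L n (t - s) * s ^ n / (Nat.factorial n : ℝ)) * Real.exp (-lam * s)‖
        ≤ C * Real.exp (-lam * s) := by
    intro s hs
    rw [Set.uIoc_of_le ht0] at hs
    obtain ⟨hs0, hst⟩ := hs
    have hts : t - s ∈ Set.Icc (0:ℝ) T := ⟨by linarith, by linarith⟩
    have hterm : ∀ n : ℕ,
        ‖convPow L n (t - s) * s ^ n / (Nat.factorial n : ℝ)‖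
          ≤ M₀ * ((M₀ * T * T) ^ n / (Nat.factorial n : ℝ)) := by
      intro n
      rw [Real.norm_eq_abs, abs_div, abs_mul, Nat.abs_cast]
      rw [div_le_iff₀ (by positivity)]
      have h1 : |convPow L n (t - s)| ≤ M₀ * (M₀ * T) ^ n :=
        convPow_bound T M₀ hM₀ (le_of_lt hT) L hL n _ hts
      have h2 : |s ^ n| ≤ T ^ n := by
        rw [abs_pow, abs_of_nonneg (le_of_lt hs0)]
        exact pow_le_pow_left₀ (le_of_lt hs0) (by linarith) n
      calc |convPow L n (t - s)| * |s ^ n| ≤ (M₀ * (M₀ * T) ^ n) * T ^ n :=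
            mul_le_mul h1 h2 (abs_nonneg _) (by positivity)
        _ = M₀ * (M₀ * T * T) ^ n := by rw [mul_pow]; ring
        _ = M₀ * ((M₀ * T * T) ^ n / (Nat.factorial n : ℝ)) * (Nat.factorial n : ℝ) := by
            field_simp
    have htsum : ‖∑' n : ℕ, convPow L n (t - s) * s ^ n / (Nat.factorial n : ℝ)‖ ≤ C :=
      tsum_of_norm_bounded hexpC hterm
    rw [norm_mul, Real.norm_eq_abs (Real.exp _), abs_of_pos (Real.exp_pos _)]
    exact mul_le_mul_of_nonneg_right htsum (le_of_lt (Real.exp_pos _))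
  have hgint : IntervalIntegrable (fun s => C * Real.exp (-lam * s)) volume 0 t :=
    (Continuous.intervalIntegrable (by continuity) 0 t)
  have hae : ∀ᵐ s ∂(volume.restrict (Set.uIoc (0:ℝ) t)),
      ‖(∑' n : ℕ, convPow L n (t - s) * s ^ n / (Nat.factorial n : ℝ)) * Real.exp (-lam * s)‖
        ≤ C * Real.exp (-lam * s) :=
    (ae_restrict_iff' measurableSet_uIoc).mpr (Filter.Eventually.of_forall hbound)
  have hmain := intervalIntegral.norm_integral_le_abs_of_norm_le hae hgint
  -- compute the integral of the dominating function
  have hne : (-lam) ≠ 0 := neg_ne_zero.mpr hlam.ne'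
  have hint : (∫ s in (0:ℝ)..t, C * Real.exp (-lam * s))
      = C * ((1 - Real.exp (-lam * t)) / lam) := by
    rw [intervalIntegral.integral_const_mul]
    have h2 : (∫ s in (0:ℝ)..t, Real.exp (-lam * s))
        = (-lam)⁻¹ • (∫ x in (-lam * 0)..(-lam * t), Real.exp x) :=
      intervalIntegral.integral_comp_mul_left Real.exp hne
    rw [h2, integral_exp, mul_zero, Real.exp_zero, smul_eq_mul]
    field_simp
    ring
  have hee : Real.exp (-lam * t) ≤ 1 := by
    rw [Real.exp_le_one_iff]; nlinarith
  have h1e : 0 ≤ 1 - Real.exp (-lam * t) := by linarith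
  rw [abs_neg, ← Real.norm_eq_abs]
  refine le_trans hmain ?_
  rw [hint, abs_of_nonneg (mul_nonneg hCpos (div_nonneg h1e hlam.le))]
  calc C * ((1 - Real.exp (-lam * t)) / lam) ≤ C * (1 / lam) :=
        mul_le_mul_of_nonneg_left ((div_le_div_iff_of_pos_right hlam).mpr (by have := Real.exp_pos (-lam * t); linarith)) hCpos
    _ = C / lam := by rw [mul_one_div]
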